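/- Let $u$ be a locally finite positive Borel measure, $\mathcal{D}$ a dyadic system of cubes, and $\{a_Q : Q \in \mathcal{D}\}$ nonnegative constants. If there is a constant $C$ with $\sum_{Q \in \mathcal{D}: Q \subset S} a_Q \le C\, u(S)$ for every $S \in \mathcal{D}$, then for every $f \in L^2(u)$, $\sum_{Q \in \mathcal{D}} a_Q |\mathbf{E}_Q^u f|^2 \le 4C \|f\|_{L^2(u)}^2$, where $\mathbf{E}_Q^u f := \frac{1}{u(Q)} \int_Q f\, du$ is the $u$-average of $f$ over $Q$. -/

import Mathlib

open MeasureTheory Set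
open scoped ENNReal

namespace CarlesonAux

/-- A downward-closed finset of naturals is an initial segment. -/
lemma downward_closed_eq_range (s : Finset ℕ) (h : ∀ k, k + 1 ∈ s → k ∈ s) :
    ∃ m, s = Finset.range m := by
  classical
  have hdown : ∀ d k, k + d ∈ s → k ∈ s := by
    intro d
    induction d with
    | zero => intro k hk; simpa using hk
    | succ d ih =>
      intro k hk
      exact ih k (h _ (by rwa [Nat.add_succ] at hk))
  have hex : ∃ m, m ∉ s := Infinite.exists_notMem_finset s
  refine ⟨Nat.find hex, ?_⟩
  ext k
  simp only [Finset.mem_range]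
  constructor
  · intro hk
    by_contra hlt
    push_neg at hlt
    exact Nat.find_spec hex (hdown (k - Nat.find hex) _ (by rwa [Nat.add_sub_cancel' hlt]))
  · intro hk
    have := Nat.find_min hex hk
    simpa using this

/-- Telescoping sums of `ENNReal.ofReal` increments. -/
lemma tele_sum (x : ℕ → ℝ) (h0 : x 0 = 0) (hnn : ∀ i, 0 ≤ x i) :
    ∀ m, (∀ i, i < m → x i ≤ x (i + 1)) →
      ∑ k ∈ Finset.range m, ENNReal.ofReal (x (k + 1) - x k) = ENNReal.ofReal (x m) := by
  intro m
  induction m with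
  | zero => simp [h0]
  | succ m ih =>
    intro hm
    rw [Finset.sum_range_succ, ih (fun i hi => hm i (hi.trans (Nat.lt_succ_self m))),
      ← ENNReal.ofReal_add (hnn m) (sub_nonneg.2 (hm m (Nat.lt_succ_self m)))]
    congr 1
    ring

/-- Selection of maximal cubes. -/
lemma exists_maximal_cover {X ι : Type*} (cube : ι → Set X)
    (hnested : ∀ i j, cube i ⊆ cube j ∨ cube j ⊆ cube i ∨ Disjoint (cube i) (cube j))
    (F : Finset ι) :
    ∃ M : Finset ι, M ⊆ F ∧ (∀ Q ∈ F, ∃ S ∈ M, cube Q ⊆ cube S) ∧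
      ∀ S ∈ M, ∀ S' ∈ M, S ≠ S' → Disjoint (cube S) (cube S') := by
  classical
  set T : Finset (Set X) := F.image cube with hT
  set Tmax : Finset (Set X) := T.filter (fun s => ∀ t ∈ T, s ⊆ t → s = t) with hTmax
  have hpick : ∀ s ∈ Tmax, ∃ Q, Q ∈ F ∧ cube Q = s := by
    intro s hs
    have := (Finset.mem_filter.1 hs).1
    simpa [hT, Finset.mem_image] using this
  choose pick hpickF hpickc using hpick
  refine ⟨Tmax.attach.image (fun s => pick s.1 s.2), ?_, ?_, ?_⟩
  · intro S hS
    rcases Finset.mem_image.1 hS with ⟨s, -, rfl⟩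
    exact hpickF s.1 s.2
  · intro Q hQ
    have hQT : cube Q ∈ T := Finset.mem_image_of_mem cube hQ
    obtain ⟨m, hm, hmax⟩ :=
      Set.Finite.exists_maximalFor id {t | t ∈ T ∧ cube Q ⊆ t} (T.finite_toSet.subset (by
        intro t ht; exact ht.1)) ⟨cube Q, hQT, subset_rfl⟩
    have hmT : m ∈ Tmax := by
      refine Finset.mem_filter.2 ⟨hm.1, fun t ht hsub => ?_⟩
      exact hsub.antisymm (hmax ⟨ht, hm.2.trans hsub⟩ hsub)
    refine ⟨pick m hmT, Finset.mem_image.2 ⟨⟨m, hmT⟩, Finset.mem_attach _ _, rfl⟩, ?_⟩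
    rw [hpickc m hmT]
    exact hm.2
  · intro S hS S' hS' hne
    rcases Finset.mem_image.1 hS with ⟨s, -, rfl⟩
    rcases Finset.mem_image.1 hS' with ⟨s', -, rfl⟩
    have hss' : s.1 ≠ s'.1 := by
      intro h
      apply hne
      obtain ⟨s, hs⟩ := s; obtain ⟨s', hs'⟩ := s'
      cases h
      rfl
    have hc : cube (pick s.1 s.2) = s.1 := hpickc s.1 s.2
    have hc' : cube (pick s'.1 s'.2) = s'.1 := hpickc s'.1 s'.2
    have hmax : ∀ t ∈ T, s.1 ⊆ t → s.1 = t := (Finset.mem_filter.1 s.2).2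
    have hmax' : ∀ t ∈ T, s'.1 ⊆ t → s'.1 = t := (Finset.mem_filter.1 s'.2).2
    rcases hnested (pick s.1 s.2) (pick s'.1 s'.2) with h | h | h
    · rw [hc, hc'] at h
      exact absurd (hmax s'.1 (Finset.mem_filter.1 s'.2).1 h) hss'
    · rw [hc, hc'] at h
      exact absurd (hmax' s.1 (Finset.mem_filter.1 s.2).1 h).symm hss'
    · exact h




variable {X ι : Type*} [MeasurableSpace X]

lemma finset_bound
    (u : Measure X) (cube : ι → Set X)
    (hmeas : ∀ i, MeasurableSet (cube i))
    (hnested : ∀ i j, cube i ⊆ cube j ∨ cube j ⊆ cube i ∨ Disjoint (cube i) (cube j))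
    (a : ι → ℝ≥0∞) (C : ℝ≥0∞)
    (hCar : ∀ S : ι, ∑' Q : {Q : ι // cube Q ⊆ cube S}, a (Q : ι) ≤ C * u (cube S))
    (g : X → ℝ) (hgm : Measurable g) (hg0 : ∀ x, 0 ≤ g x) (hg : MemLp g 2 u)
    (F : Finset ι) :
    ∑ Q ∈ F, a Q * ENNReal.ofReal (((u (cube Q)).toReal⁻¹ * ∫ x in cube Q, g x ∂u) ^ 2)
      ≤ 4 * C * ∫⁻ x, (ENNReal.ofReal (g x)) ^ 2 ∂u := by
  classical
  set G : X → ℝ≥0∞ := fun x => ENNReal.ofReal (g x) with hGdef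
  have hGm : Measurable G := hgm.ennreal_ofReal
  set I : ℝ≥0∞ := ∫⁻ x, G x ^ 2 ∂u with hIdef
  set e : ι → ℝ := fun Q => (u (cube Q)).toReal⁻¹ * ∫ x in cube Q, g x ∂u with hedef
  have he_nonneg : ∀ Q, 0 ≤ e Q := fun Q =>
    mul_nonneg (inv_nonneg.2 ENNReal.toReal_nonneg) (integral_nonneg fun x => hg0 x)
  set F' : Finset ι := F.filter (fun Q => 0 < e Q) with hF'
  have hsum_eq : ∑ Q ∈ F', a Q * ENNReal.ofReal (e Q ^ 2)
      = ∑ Q ∈ F, a Q * ENNReal.ofReal (e Q ^ 2) := by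
    refine Finset.sum_subset (Finset.filter_subset _ _) fun Q hQ hQ' => ?_
    have : e Q = 0 := le_antisymm (by simpa [hF', hQ] using hQ') (he_nonneg Q)
    simp [this]
  have htR : ∀ Q ∈ F', (u (cube Q)).toReal ≠ 0 := by
    intro Q hQ h0
    have : e Q = 0 := by rw [hedef]; simp [h0]
    have h1 : 0 < e Q := (Finset.mem_filter.1 hQ).2
    rw [this] at h1
    exact lt_irrefl 0 h1
  have hufin : ∀ Q ∈ F', u (cube Q) ≠ ∞ := by
    intro Q hQ htop
    exact htR Q hQ (by rw [htop]; simp)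
  have hune0 : ∀ Q ∈ F', u (cube Q) ≠ 0 := by
    intro Q hQ h0
    exact htR Q hQ (by rw [h0]; simp)
  have hInt : ∀ Q : ι, u (cube Q) ≠ ∞ → IntegrableOn g (cube Q) u := by
    intro Q hfin
    haveI : IsFiniteMeasure (u.restrict (cube Q)) :=
      ⟨by rw [Measure.restrict_apply_univ]; exact lt_top_iff_ne_top.2 hfin⟩
    exact (hg.restrict (cube Q)).integrable one_le_two
  have hES : ∀ Q ∈ F', ENNReal.ofReal (e Q) * u (cube Q) = ∫⁻ x in cube Q, G x ∂u := by
    intro Q hQ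
    have h1 : u (cube Q) ≠ ∞ := hufin Q hQ
    have h2 : (u (cube Q)).toReal ≠ 0 := htR Q hQ
    have h3 : 0 < (u (cube Q)).toReal := lt_of_le_of_ne ENNReal.toReal_nonneg (Ne.symm h2)
    have hint : 0 ≤ ∫ x in cube Q, g x ∂u := integral_nonneg fun x => hg0 x
    have hu : u (cube Q) = ENNReal.ofReal ((u (cube Q)).toReal) := (ENNReal.ofReal_toReal h1).symm
    rw [← ofReal_integral_eq_lintegral_ofReal (hInt Q h1)
      (Filter.Eventually.of_forall fun x => hg0 x)]
    conv_lhs => rw [hu]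
    rw [hedef]
    rw [← ENNReal.ofReal_mul (mul_nonneg (inv_nonneg.2 h3.le) hint)]
    congr 1
    field_simp
  -- the sorted positive values of e on F'
  set V : Finset ℝ := F'.image e with hV
  set n : ℕ := V.card with hn
  have hVpos : ∀ v ∈ V, 0 < v := by
    intro v hv
    rcases Finset.mem_image.1 hv with ⟨Q, hQ, rfl⟩
    exact (Finset.mem_filter.1 hQ).2
  set o := V.orderIsoOfFin hn.symm with ho
  set lam : ℕ → ℝ := fun k => if h : 0 < k ∧ k - 1 < n then (o ⟨k - 1, h.2⟩ : ℝ) else 0 with hlam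
  have hlam0 : lam 0 = 0 := by simp [hlam]
  have hlam_memV : ∀ k, 0 < k → k ≤ n → lam k ∈ V := by
    intro k h1 h2
    have hk : 0 < k ∧ k - 1 < n := ⟨h1, by omega⟩
    simp only [hlam, dif_pos hk]
    exact (o ⟨k - 1, hk.2⟩).2
  have hlam_nonneg : ∀ k, 0 ≤ lam k := by
    intro k
    by_cases hk : 0 < k ∧ k - 1 < n
    · exact (hVpos _ (hlam_memV k hk.1 (by omega))).le
    · simp only [hlam, dif_neg hk]; exact le_rfl
  have hlam_mono : ∀ i j, i ≤ j → j ≤ n → lam i ≤ lam j := by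
    intro i j hij hjn
    rcases Nat.eq_zero_or_pos i with rfl | hi
    · rcases Nat.eq_zero_or_pos j with rfl | hj
      · exact le_rfl
      · rw [hlam0]; exact (hVpos _ (hlam_memV j hj hjn)).le
    have hj : 0 < j := lt_of_lt_of_le hi hij
    have hki : 0 < i ∧ i - 1 < n := ⟨hi, by omega⟩
    have hkj : 0 < j ∧ j - 1 < n := ⟨hj, by omega⟩
    simp only [hlam, dif_pos hki, dif_pos hkj]
    have : (⟨i - 1, hki.2⟩ : Fin n) ≤ ⟨j - 1, hkj.2⟩ := by
      simp only [Fin.mk_le_mk]; omega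
    exact_mod_cast o.monotone this
  have hsurj : ∀ v ∈ V, ∃ j, 0 < j ∧ j ≤ n ∧ lam j = v := by
    intro v hv
    refine ⟨(o.symm ⟨v, hv⟩).1 + 1, Nat.succ_pos _, (o.symm ⟨v, hv⟩).2, ?_⟩
    have hk : 0 < (o.symm ⟨v, hv⟩).1 + 1 ∧ (o.symm ⟨v, hv⟩).1 + 1 - 1 < n :=
      ⟨Nat.succ_pos _, by simpa using (o.symm ⟨v, hv⟩).2⟩
    simp only [hlam, dif_pos hk]
    have : (⟨(o.symm ⟨v, hv⟩).1 + 1 - 1, hk.2⟩ : Fin n) = o.symm ⟨v, hv⟩ := by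
      apply Fin.ext; simp
    rw [this, OrderIso.apply_symm_apply]
  set Fk : ℕ → Finset ι := fun k => F'.filter (fun Q => lam (k + 1) ≤ e Q) with hFk
  set U : ℕ → Set X := fun k => ⋃ Q ∈ Fk k, cube Q with hU
  have hUm : ∀ k, MeasurableSet (U k) := fun k =>
    (Fk k).measurableSet_biUnion (fun Q _ => hmeas Q)
  have hUfin : ∀ k, u (U k) ≠ ∞ := by
    intro k
    refine (lt_of_le_of_lt (measure_biUnion_finset_le _ _) ?_).ne
    refine ENNReal.sum_lt_top.2 fun Q hQ => ?_
    exact lt_top_iff_ne_top.2 (hufin Q (Finset.mem_filter.1 hQ).1)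
  set A : ℕ → ℝ≥0∞ := fun k => ∑ Q ∈ Fk k, a Q with hA
  set d : ℕ → ℝ≥0∞ := fun k => ENNReal.ofReal (lam (k + 1) ^ 2 - lam k ^ 2) with hd
  set P : ℝ≥0∞ := ∑ k ∈ Finset.range n, d k * u (U k) with hP
  have hPfin : P ≠ ∞ := by
    rw [hP]
    refine (ENNReal.sum_lt_top.2 fun k _ => ?_).ne
    exact ENNReal.mul_lt_top ENNReal.ofReal_lt_top (lt_top_iff_ne_top.2 (hUfin k))
  -- the maximal-cube estimates
  have claimB : ∀ k ∈ Finset.range n, A k ≤ C * u (U k) ∧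
      ENNReal.ofReal (lam (k + 1)) * u (U k) ≤ ∫⁻ x in U k, G x ∂u := by
    intro k hk
    obtain ⟨M, hMF, hMcov, hMdisj⟩ := exists_maximal_cover cube hnested (Fk k)
    have hMdisj' : (↑M : Set ι).PairwiseDisjoint cube := fun S hS S' hS' hne =>
      hMdisj S hS S' hS' hne
    have hUeq : U k = ⋃ S ∈ M, cube S := by
      apply Set.Subset.antisymm
      · refine Set.iUnion₂_subset fun Q hQ => ?_
        rcases hMcov Q hQ with ⟨S, hS, hsub⟩
        exact hsub.trans (Set.subset_biUnion_of_mem hS)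
      · exact Set.iUnion₂_subset fun S hS => Set.subset_biUnion_of_mem (hMF hS)
    have hUmeq : u (U k) = ∑ S ∈ M, u (cube S) := by
      rw [hUeq]
      exact measure_biUnion_finset hMdisj' (fun S _ => hmeas S)
    constructor
    · have hcov : Fk k ⊆ M.biUnion (fun S => (Fk k).filter (fun Q => cube Q ⊆ cube S)) := by
        intro Q hQ
        rcases hMcov Q hQ with ⟨S, hS, hsub⟩
        exact Finset.mem_biUnion.2 ⟨S, hS, Finset.mem_filter.2 ⟨hQ, hsub⟩⟩
      have hdisjF : (↑M : Set ι).PairwiseDisjoint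
          (fun S => (Fk k).filter (fun Q => cube Q ⊆ cube S)) := by
        intro S hS S' hS' hne
        simp only [Function.onFun, Finset.disjoint_left]
        intro Q hQ1 hQ2
        have h1 : cube Q ⊆ cube S := (Finset.mem_filter.1 hQ1).2
        have h2 : cube Q ⊆ cube S' := (Finset.mem_filter.1 hQ2).2
        have h0 : cube Q ⊆ (∅ : Set X) := by
          rw [← Set.disjoint_iff_inter_eq_empty.1 (hMdisj S hS S' hS' hne)]
          exact Set.subset_inter h1 h2
        exact hune0 Q (Finset.mem_filter.1 (Finset.mem_filter.1 hQ1).1).1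
          (measure_mono_null h0 measure_empty)
      have hinner : ∀ S ∈ M,
          ∑ Q ∈ (Fk k).filter (fun Q => cube Q ⊆ cube S), a Q ≤ C * u (cube S) := by
        intro S hS
        refine le_trans ?_ (hCar S)
        rw [show (∑' Q : {Q : ι // cube Q ⊆ cube S}, a (Q : ι))
            = ∑' Q : ι, Set.indicator {Q : ι | cube Q ⊆ cube S} a Q from tsum_subtype _ _]
        calc ∑ Q ∈ (Fk k).filter (fun Q => cube Q ⊆ cube S), a Q
            = ∑ Q ∈ (Fk k).filter (fun Q => cube Q ⊆ cube S),
                Set.indicator {Q : ι | cube Q ⊆ cube S} a Q :=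
              Finset.sum_congr rfl fun Q hQ =>
                (Set.indicator_of_mem (show Q ∈ {Q : ι | cube Q ⊆ cube S} from (Finset.mem_filter.1 hQ).2) a).symm
          _ ≤ ∑' Q : ι, Set.indicator {Q : ι | cube Q ⊆ cube S} a Q :=
              ENNReal.sum_le_tsum _
      calc A k ≤ ∑ Q ∈ M.biUnion (fun S => (Fk k).filter (fun Q => cube Q ⊆ cube S)), a Q :=
            Finset.sum_le_sum_of_subset hcov
        _ = ∑ S ∈ M, ∑ Q ∈ (Fk k).filter (fun Q => cube Q ⊆ cube S), a Q :=
            Finset.sum_biUnion hdisjF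
        _ ≤ ∑ S ∈ M, C * u (cube S) := Finset.sum_le_sum hinner
        _ = C * u (U k) := by rw [← Finset.mul_sum, hUmeq]
    · have hstep : ∀ S ∈ M, ENNReal.ofReal (lam (k + 1)) * u (cube S)
          ≤ ∫⁻ x in cube S, G x ∂u := by
        intro S hS
        have hSF' : S ∈ F' := (Finset.mem_filter.1 (hMF hS)).1
        have hle : lam (k + 1) ≤ e S := (Finset.mem_filter.1 (hMF hS)).2
        calc ENNReal.ofReal (lam (k + 1)) * u (cube S)
            ≤ ENNReal.ofReal (e S) * u (cube S) :=
              mul_le_mul_left (ENNReal.ofReal_le_ofReal hle) _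
          _ = ∫⁻ x in cube S, G x ∂u := hES S hSF'
      calc ENNReal.ofReal (lam (k + 1)) * u (U k)
          = ∑ S ∈ M, ENNReal.ofReal (lam (k + 1)) * u (cube S) := by
            rw [hUmeq, Finset.mul_sum]
        _ ≤ ∑ S ∈ M, ∫⁻ x in cube S, G x ∂u := Finset.sum_le_sum hstep
        _ = ∫⁻ x in U k, G x ∂u := by
            rw [hUeq]
            exact (lintegral_biUnion_finset hMdisj' (fun S _ => hmeas S) _).symm
  -- Abel summation / layer-cake for the left-hand side
  have claim1 : ∀ Q ∈ F', ENNReal.ofReal (e Q ^ 2)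
      ≤ ∑ k ∈ (Finset.range n).filter (fun k => lam (k + 1) ≤ e Q), d k := by
    intro Q hQ
    obtain ⟨j, hj0, hjn, hje⟩ := hsurj (e Q) (Finset.mem_image_of_mem e hQ)
    have hsub : Finset.range j ⊆ (Finset.range n).filter (fun k => lam (k + 1) ≤ e Q) := by
      intro k hk
      have hkj : k < j := Finset.mem_range.1 hk
      refine Finset.mem_filter.2 ⟨Finset.mem_range.2 (by omega), ?_⟩
      rw [← hje]
      exact hlam_mono (k + 1) j (by omega) hjn
    have htel : ∑ k ∈ Finset.range j, d k = ENNReal.ofReal (e Q ^ 2) := by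
      have := tele_sum (fun i => lam i ^ 2) (by simp [hlam0])
        (fun i => sq_nonneg _) j (fun i hi => by
          have h1 : lam i ≤ lam (i + 1) := hlam_mono i (i + 1) (by omega) (by omega)
          exact pow_le_pow_left₀ (hlam_nonneg i) h1 2)
      rw [hd, this]
      show ENNReal.ofReal (lam j ^ 2) = ENNReal.ofReal (e Q ^ 2)
      rw [hje]
    rw [← htel]
    exact Finset.sum_le_sum_of_subset hsub
  have hstep1 : ∑ Q ∈ F', a Q * ENNReal.ofReal (e Q ^ 2)
      ≤ ∑ k ∈ Finset.range n, d k * A k := by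
    calc ∑ Q ∈ F', a Q * ENNReal.ofReal (e Q ^ 2)
        ≤ ∑ Q ∈ F', a Q * ∑ k ∈ (Finset.range n).filter (fun k => lam (k + 1) ≤ e Q), d k :=
          Finset.sum_le_sum fun Q hQ => mul_le_mul_right (claim1 Q hQ) _
      _ = ∑ Q ∈ F', ∑ k ∈ Finset.range n, if lam (k + 1) ≤ e Q then a Q * d k else 0 := by
          refine Finset.sum_congr rfl fun Q hQ => ?_
          rw [Finset.sum_filter, Finset.mul_sum]
          exact Finset.sum_congr rfl fun k hk => by rw [mul_ite, mul_zero]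
      _ = ∑ k ∈ Finset.range n, ∑ Q ∈ F', if lam (k + 1) ≤ e Q then a Q * d k else 0 :=
          Finset.sum_comm
      _ = ∑ k ∈ Finset.range n, d k * A k := by
          refine Finset.sum_congr rfl fun k hk => ?_
          rw [← Finset.sum_filter, hA]
          rw [← Finset.sum_mul, mul_comm]
  -- the (discrete) maximal function
  set H : X → ℝ≥0∞ := fun x =>
    ∑ k ∈ Finset.range n, (U k).indicator (fun _ => ENNReal.ofReal (lam (k + 1) - lam k)) x
    with hH
  have hHm : Measurable H := by
    rw [hH]
    exact Finset.measurable_sum _ fun k _ => (measurable_const.indicator (hUm k))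
  have hkey : ∀ x : X, ∃ m, m ≤ n ∧
      (Finset.range n).filter (fun k => x ∈ U k) = Finset.range m := by
    intro x
    obtain ⟨m, hm⟩ := downward_closed_eq_range ((Finset.range n).filter (fun k => x ∈ U k))
      (by
        intro k hk
        have h1 := Finset.mem_filter.1 hk
        have hkn : k + 1 < n := Finset.mem_range.1 h1.1
        refine Finset.mem_filter.2 ⟨Finset.mem_range.2 (by omega), ?_⟩
        have hsub : Fk (k + 1) ⊆ Fk k := by
          intro Q hQ
          have h2 := Finset.mem_filter.1 hQ
          refine Finset.mem_filter.2 ⟨h2.1, le_trans ?_ h2.2⟩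
          exact hlam_mono (k + 1) (k + 2) (by omega) (by omega)
        have : U (k + 1) ⊆ U k := by
          rw [hU]
          exact Set.iUnion₂_subset fun Q hQ => Set.subset_biUnion_of_mem (hsub hQ)
        exact this h1.2)
    refine ⟨m, ?_, hm⟩
    rcases Nat.eq_zero_or_pos m with rfl | hm0
    · omega
    · have : m - 1 ∈ Finset.range m := Finset.mem_range.2 (by omega)
      rw [← hm] at this
      have := Finset.mem_range.1 (Finset.mem_filter.1 this).1
      omega
  have hHT : ∀ x, H x ^ 2 = ∑ k ∈ Finset.range n, (U k).indicator (fun _ => d k) x := by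
    intro x
    obtain ⟨m, hmn, hfil⟩ := hkey x
    have e1 : H x = ENNReal.ofReal (lam m) := by
      rw [hH]
      simp only [Set.indicator_apply]
      rw [← Finset.sum_filter, hfil]
      exact tele_sum lam hlam0 hlam_nonneg m
        (fun i hi => hlam_mono i (i + 1) (by omega) (by omega))
    have e2 : ∑ k ∈ Finset.range n, (U k).indicator (fun _ => d k) x
        = ENNReal.ofReal (lam m ^ 2) := by
      simp only [Set.indicator_apply, hd]
      rw [← Finset.sum_filter, hfil]
      exact tele_sum (fun i => lam i ^ 2) (by simp [hlam0]) (fun i => sq_nonneg _) m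
        (fun i hi => pow_le_pow_left₀ (hlam_nonneg i)
          (hlam_mono i (i + 1) (by omega) (by omega)) 2)
    rw [e1, e2, ← ENNReal.ofReal_pow (hlam_nonneg m)]
  have hTlint : ∫⁻ x, H x ^ 2 ∂u = P := by
    rw [lintegral_congr hHT,
      lintegral_finset_sum _ (fun k _ => measurable_const.indicator (hUm k)), hP]
    exact Finset.sum_congr rfl fun k _ => lintegral_indicator_const (hUm k) _
  have hGHeq : ∫⁻ x, G x * H x ∂u
      = ∑ k ∈ Finset.range n, ENNReal.ofReal (lam (k + 1) - lam k) * ∫⁻ x in U k, G x ∂u := by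
    have hpt : ∀ x, G x * H x = ∑ k ∈ Finset.range n,
        (U k).indicator (fun y => ENNReal.ofReal (lam (k + 1) - lam k) * G y) x := by
      intro x
      rw [hH, Finset.mul_sum]
      refine Finset.sum_congr rfl fun k _ => ?_
      by_cases hx : x ∈ U k <;> simp [Set.indicator_apply, hx, mul_comm]
    rw [lintegral_congr hpt,
      lintegral_finset_sum _ (f := fun k y => (U k).indicator (fun y => ENNReal.ofReal (lam (k + 1) - lam k) * G y) y)
        (fun k _ => (measurable_const.mul hGm).indicator (hUm k))]
    refine Finset.sum_congr rfl fun k _ => ?_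
    rw [lintegral_indicator (hUm k), lintegral_const_mul _ hGm]
  have hPle : P ≤ 2 * ∫⁻ x, G x * H x ∂u := by
    rw [hGHeq, Finset.mul_sum, hP]
    refine Finset.sum_le_sum fun k hk => ?_
    have hmono : lam k ≤ lam (k + 1) :=
      hlam_mono k (k + 1) (by omega) (Finset.mem_range.1 hk)
    have h1 : d k ≤ 2 * (ENNReal.ofReal (lam (k + 1)) * ENNReal.ofReal (lam (k + 1) - lam k)) := by
      rw [hd, ← ENNReal.ofReal_mul (hlam_nonneg (k + 1)),
        show (2 : ℝ≥0∞) = ENNReal.ofReal 2 by norm_num,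
        ← ENNReal.ofReal_mul (by norm_num)]
      apply ENNReal.ofReal_le_ofReal
      nlinarith [sq_nonneg (lam (k + 1) - lam k)]
    calc d k * u (U k)
        ≤ (2 * (ENNReal.ofReal (lam (k + 1)) * ENNReal.ofReal (lam (k + 1) - lam k))) * u (U k) :=
          mul_le_mul_left h1 _
      _ = 2 * (ENNReal.ofReal (lam (k + 1) - lam k) * (ENNReal.ofReal (lam (k + 1)) * u (U k))) := by
          ring
      _ ≤ 2 * (ENNReal.ofReal (lam (k + 1) - lam k) * ∫⁻ x in U k, G x ∂u) := by
          exact mul_le_mul_right (mul_le_mul_right (claimB k hk).2 _) 2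
  -- Cauchy–Schwarz
  have hCS : ∫⁻ x, G x * H x ∂u ≤ I ^ (1 / 2 : ℝ) * P ^ (1 / 2 : ℝ) := by
    have hconj : Real.HolderConjugate 2 2 := Real.HolderConjugate.two_two
    have h := ENNReal.lintegral_mul_le_Lp_mul_Lq u hconj hGm.aemeasurable hHm.aemeasurable
    have hg2 : ∫⁻ x, G x ^ (2 : ℝ) ∂u = I := by
      rw [hIdef]
      refine lintegral_congr fun x => ?_
      rw [show (2 : ℝ) = ((2 : ℕ) : ℝ) by norm_num, ENNReal.rpow_natCast]
    have hh2 : ∫⁻ x, H x ^ (2 : ℝ) ∂u = P := by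
      rw [← hTlint]
      refine lintegral_congr fun x => ?_
      rw [show (2 : ℝ) = ((2 : ℕ) : ℝ) by norm_num, ENNReal.rpow_natCast]
    calc ∫⁻ x, G x * H x ∂u = ∫⁻ x, (G * H) x ∂u := rfl
      _ ≤ (∫⁻ x, G x ^ (2 : ℝ) ∂u) ^ (1 / 2 : ℝ) * (∫⁻ x, H x ^ (2 : ℝ) ∂u) ^ (1 / 2 : ℝ) := h
      _ = I ^ (1 / 2 : ℝ) * P ^ (1 / 2 : ℝ) := by rw [hg2, hh2]
  -- conclude `P ≤ 4 I`
  have hP4I : P ≤ 4 * I := by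
    by_cases hP0 : P = 0
    · rw [hP0]; exact zero_le
    have h1 : P ≤ 2 * I ^ (1 / 2 : ℝ) * P ^ (1 / 2 : ℝ) := by
      calc P ≤ 2 * ∫⁻ x, G x * H x ∂u := hPle
        _ ≤ 2 * (I ^ (1 / 2 : ℝ) * P ^ (1 / 2 : ℝ)) := mul_le_mul_right hCS 2
        _ = 2 * I ^ (1 / 2 : ℝ) * P ^ (1 / 2 : ℝ) := by ring
    have hPh0 : P ^ (1 / 2 : ℝ) ≠ 0 := by
      simp only [ne_eq, ENNReal.rpow_eq_zero_iff, not_or]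
      constructor
      · rintro ⟨h, -⟩; exact hP0 h
      · rintro ⟨h, -⟩; exact hPfin h
    have hPht : P ^ (1 / 2 : ℝ) ≠ ∞ := by
      simp only [ne_eq, ENNReal.rpow_eq_top_iff, not_or]
      constructor
      · rintro ⟨h, -⟩; exact hP0 h
      · rintro ⟨h, -⟩; exact hPfin h
    have h2 : P ^ (1 / 2 : ℝ) * P ^ (1 / 2 : ℝ) = P := by
      rw [← ENNReal.rpow_add _ _ hP0 hPfin]
      norm_num
    have h3 : P ^ (1 / 2 : ℝ) ≤ 2 * I ^ (1 / 2 : ℝ) := by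
      rw [← ENNReal.mul_le_mul_iff_left hPh0 hPht, h2]
      exact h1
    calc P = (P ^ (1 / 2 : ℝ)) ^ (2 : ℕ) := by
          rw [← ENNReal.rpow_natCast, ← ENNReal.rpow_mul]; norm_num
      _ ≤ (2 * I ^ (1 / 2 : ℝ)) ^ (2 : ℕ) := pow_le_pow_left' h3 2
      _ = 4 * I := by
          rw [mul_pow, ← ENNReal.rpow_natCast (I ^ (1 / 2 : ℝ)), ← ENNReal.rpow_mul]
          norm_num
  -- final assembly
  calc ∑ Q ∈ F, a Q * ENNReal.ofReal (e Q ^ 2)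
      = ∑ Q ∈ F', a Q * ENNReal.ofReal (e Q ^ 2) := hsum_eq.symm
    _ ≤ ∑ k ∈ Finset.range n, d k * A k := hstep1
    _ ≤ ∑ k ∈ Finset.range n, d k * (C * u (U k)) :=
        Finset.sum_le_sum fun k hk => mul_le_mul_right (claimB k hk).1 _
    _ = C * P := by
        rw [hP, Finset.mul_sum]
        exact Finset.sum_congr rfl fun k _ => by ring
    _ ≤ C * (4 * I) := mul_le_mul_right hP4I C
    _ = 4 * C * I := by ring


lemma tsum_bound
    (u : Measure X) (cube : ι → Set X)
    (hmeas : ∀ i, MeasurableSet (cube i))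
    (hnested : ∀ i j, cube i ⊆ cube j ∨ cube j ⊆ cube i ∨ Disjoint (cube i) (cube j))
    (a : ι → ℝ≥0∞) (C : ℝ≥0∞)
    (hCar : ∀ S : ι, ∑' Q : {Q : ι // cube Q ⊆ cube S}, a (Q : ι) ≤ C * u (cube S))
    (g : X → ℝ) (hgm : Measurable g) (hg0 : ∀ x, 0 ≤ g x) (hg : MemLp g 2 u) :
    ∑' Q : ι, a Q * ENNReal.ofReal (((u (cube Q)).toReal⁻¹ * ∫ x in cube Q, g x ∂u) ^ 2)
      ≤ 4 * C * (eLpNorm g 2 u) ^ 2 := by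
  have hnorm : eLpNorm g 2 u ^ 2 = ∫⁻ x, (ENNReal.ofReal (g x)) ^ 2 ∂u := by
    rw [eLpNorm_eq_lintegral_rpow_enorm_toReal (two_ne_zero) (ENNReal.ofNat_ne_top)]
    rw [← ENNReal.rpow_natCast _ 2, ← ENNReal.rpow_mul]
    have h2 : ENNReal.toReal 2 = 2 := by norm_num
    rw [h2]
    norm_num
    refine lintegral_congr fun x => ?_
    rw [show (‖g x‖ₑ) = ENNReal.ofReal (g x) by
      rw [Real.enorm_eq_ofReal (hg0 x)]]
    try rw [show (2 : ℝ) = ((2 : ℕ) : ℝ) by norm_num, ENNReal.rpow_natCast]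
  rw [hnorm]
  rw [ENNReal.tsum_eq_iSup_sum]
  exact iSup_le fun F => finset_bound u cube hmeas hnested a C hCar g hgm hg0 hg F

end CarlesonAux

/-- The dyadic Carleson embedding theorem: if the nonnegative coefficients `a Q`
satisfy the Carleson packing condition `∑_{Q ⊆ S} a Q ≤ C u(S)` over all dyadic
cubes `S`, then `∑_Q a Q |E_Q^u f|² ≤ 4 C ‖f‖_{L²(u)}²`. -/
theorem carleson_embedding
    {X ι : Type*} [MeasurableSpace X]
    (u : Measure X)
    (cube : ι → Set X)
    (hmeas : ∀ i, MeasurableSet (cube i))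
    (hnested : ∀ i j, cube i ⊆ cube j ∨ cube j ⊆ cube i ∨ Disjoint (cube i) (cube j))
    (a : ι → ℝ≥0∞) (C : ℝ≥0∞)
    (hCar : ∀ S : ι, ∑' Q : {Q : ι // cube Q ⊆ cube S}, a (Q : ι) ≤ C * u (cube S))
    (f : X → ℝ) (hf : MemLp f 2 u) :
    ∑' Q : ι, a Q * ENNReal.ofReal (((u (cube Q)).toReal⁻¹ * ∫ x in cube Q, f x ∂u) ^ 2)
      ≤ 4 * C * (eLpNorm f 2 u) ^ 2 := by
  classical
  set g : X → ℝ := fun x => |hf.1.mk f x| with hgdef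
  have hgm : Measurable g := hf.1.measurable_mk.abs
  have hg0 : ∀ x, 0 ≤ g x := fun x => abs_nonneg _
  have hgae : g =ᵐ[u] fun x => |f x| := hf.1.ae_eq_mk.symm.mono fun x hx => by
    simp [hgdef, hx]
  have hfabs : MemLp (fun x => |f x|) 2 u := by
    simpa [Real.norm_eq_abs] using hf.norm
  have hg : MemLp g 2 u := hfabs.ae_eq hgae.symm
  have hnormeq : eLpNorm g 2 u = eLpNorm f 2 u := by
    rw [eLpNorm_congr_ae hgae]
    simpa [Real.norm_eq_abs] using eLpNorm_norm f (p := 2) (μ := u)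
  have hmain := CarlesonAux.tsum_bound u cube hmeas hnested a C hCar g hgm hg0 hg
  rw [hnormeq] at hmain
  refine le_trans (ENNReal.tsum_le_tsum fun Q => ?_) hmain
  -- termwise comparison
  by_cases hu : u (cube Q) = ∞ ∨ u (cube Q) = 0
  · have : (u (cube Q)).toReal = 0 := by rcases hu with h | h <;> simp [h]
    simp [this]
  push_neg at hu
  have hufin : u (cube Q) ≠ ∞ := hu.1
  have htR : 0 < (u (cube Q)).toReal := ENNReal.toReal_pos hu.2 hu.1
  haveI : IsFiniteMeasure (u.restrict (cube Q)) :=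
    ⟨by rw [Measure.restrict_apply_univ]; exact lt_top_iff_ne_top.2 hufin⟩
  have hfint : IntegrableOn f (cube Q) u := (hf.restrict (cube Q)).integrable one_le_two
  have habs : |∫ x in cube Q, f x ∂u| ≤ ∫ x in cube Q, g x ∂u := by
    refine le_trans (by simpa [Real.norm_eq_abs] using
      norm_integral_le_integral_norm (μ := u.restrict (cube Q)) f) (le_of_eq ?_)
    exact integral_congr_ae (ae_restrict_of_ae hgae.symm)
  refine mul_le_mul_right (ENNReal.ofReal_le_ofReal ?_) _
  have hb : |(u (cube Q)).toReal⁻¹ * ∫ x in cube Q, f x ∂u|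
      ≤ (u (cube Q)).toReal⁻¹ * ∫ x in cube Q, g x ∂u := by
    rw [abs_mul, abs_of_nonneg (inv_nonneg.2 htR.le)]
    exact mul_le_mul_of_nonneg_left habs (inv_nonneg.2 htR.le)
  have hab := abs_le.1 hb
  exact sq_le_sq' hab.1 hab.2
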